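/- Let û : ℝ≥0 → ℂ⁶ solve the Fourier-transformed Model II system with m = 6 as above. Then ∂ₜ( a₆·ξ·Re(û₁·conj(û₄)) − a₅·Re(i·û₁·conj(û₆)) ) − a₄·a₆·ξ²·Re(i·û₁·conj(û₃)) + a₆·ξ²·Re(i·û₂·conj(û₄)) + a₅·ξ·Re(û₂·conj(û₆)) = 0 for all t ≥ 0. -/

import Mathlib

open Complex

/-- Dissipation identity (3.4) for the Fourier-transformed Model II system with m = 6. -/
theorem stmt16 (γ ξ a₄ a₅ a₆ : ℝ) (hγ : 0 < γ)
    (ha₄ : a₄ ≠ 0) (ha₅ : a₅ ≠ 0) (ha₆ : a₆ ≠ 0)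
    (u : ℝ → Fin 6 → ℂ)
    (hdiff : ∀ j : Fin 6, ∀ t : ℝ, 0 ≤ t → DifferentiableAt ℝ (fun s => u s j) t)
    (h1 : ∀ t : ℝ, 0 ≤ t →
      deriv (fun s => u s 0) t + I * (ξ : ℂ) * u t 1 = 0)
    (h2 : ∀ t : ℝ, 0 ≤ t →
      deriv (fun s => u s 1) t + I * (ξ : ℂ) * u t 0 + (γ : ℂ) * u t 1 + u t 2 = 0)
    (h3 : ∀ t : ℝ, 0 ≤ t →
      deriv (fun s => u s 2) t + I * (ξ : ℂ) * (a₄ : ℂ) * u t 3 - u t 1 = 0)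
    (h4 : ∀ t : ℝ, 0 ≤ t →
      deriv (fun s => u s 3) t + I * (ξ : ℂ) * (a₄ : ℂ) * u t 2 + (a₅ : ℂ) * u t 4 = 0)
    (h5 : ∀ t : ℝ, 0 ≤ t →
      deriv (fun s => u s 4) t + I * (ξ : ℂ) * (a₆ : ℂ) * u t 5 - (a₅ : ℂ) * u t 3 = 0)
    (h6 : ∀ t : ℝ, 0 ≤ t →
      deriv (fun s => u s 5) t + I * (ξ : ℂ) * (a₆ : ℂ) * u t 4 = 0) :
    ∀ t : ℝ, 0 ≤ t →
      deriv (fun s => a₆ * ξ * (u s 0 * (starRingEnd ℂ) (u s 3)).re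
          - a₅ * (I * u s 0 * (starRingEnd ℂ) (u s 5)).re) t
      - a₄ * a₆ * ξ^2 * (I * u t 0 * (starRingEnd ℂ) (u t 2)).re
      + a₆ * ξ^2 * (I * u t 1 * (starRingEnd ℂ) (u t 3)).re
      + a₅ * ξ * (u t 1 * (starRingEnd ℂ) (u t 5)).re = 0 := by
  intro t ht
  have H0 := (hdiff 0 t ht).hasDerivAt
  have H3 := (hdiff 3 t ht).hasDerivAt
  have H5 := (hdiff 5 t ht).hasDerivAt
  have e0 : deriv (fun s => u s 0) t = -(I * (ξ : ℂ) * u t 1) := by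
    have := h1 t ht; linear_combination this
  have e3 : deriv (fun s => u s 3) t
      = -(I * (ξ : ℂ) * (a₄ : ℂ) * u t 2 + (a₅ : ℂ) * u t 4) := by
    have := h4 t ht; linear_combination this
  have e5 : deriv (fun s => u s 5) t = -(I * (ξ : ℂ) * (a₆ : ℂ) * u t 4) := by
    have := h6 t ht; linear_combination this
  rw [e0] at H0; rw [e3] at H3; rw [e5] at H5
  have h03 : HasDerivAt (fun s => u s 0 * (starRingEnd ℂ) (u s 3))
      (-(I * (ξ : ℂ) * u t 1) * (starRingEnd ℂ) (u t 3)
        + u t 0 * (starRingEnd ℂ) (-(I * (ξ : ℂ) * (a₄ : ℂ) * u t 2 + (a₅ : ℂ) * u t 4))) t := by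
    have := H0.mul H3.star
    simp at this ⊢
    exact this
  have h05 : HasDerivAt (fun s => I * u s 0 * (starRingEnd ℂ) (u s 5))
      (I * (-(I * (ξ : ℂ) * u t 1)) * (starRingEnd ℂ) (u t 5)
        + I * u t 0 * (starRingEnd ℂ) (-(I * (ξ : ℂ) * (a₆ : ℂ) * u t 4))) t := by
    have := (H0.const_mul I).mul H5.star
    simp [Pi.mul_def, mul_assoc, mul_comm, mul_left_comm, mul_add, add_mul] at this ⊢
    exact this
  have r03 := Complex.reCLM.hasFDerivAt.comp_hasDerivAt t h03
  have r05 := Complex.reCLM.hasFDerivAt.comp_hasDerivAt t h05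
  have HF := ((r03.const_mul (a₆ * ξ)).sub (r05.const_mul a₅))
  have hderiv := HF.deriv
  simp only [Function.comp_def, Complex.reCLM_apply, Pi.sub_def] at hderiv
  rw [hderiv]
  simp only [map_add, map_neg, map_mul, Complex.conj_I, Complex.conj_ofReal,
    Complex.add_re, Complex.neg_re, Complex.mul_re, Complex.mul_im,
    Complex.add_im, Complex.neg_im, Complex.I_re, Complex.I_im,
    Complex.ofReal_re, Complex.ofReal_im, Complex.conj_re, Complex.conj_im]
  ring
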